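/- Let $A$ be a dilation matrix, $b = |\det A|$, and let $a \in L^1(\mathbb{R}^d)$ be an $H^1_A$-atom supported in $\Delta_k = A^k(\Delta)$, i.e. $\|a\|_\infty \le |\Delta_k|^{-1}$ and $\int a = 0$. Let $\rho_*$ be the quasi-norm associated with $A^*$ and $\zeta_- = \ln\lambda_- /\ln b$ where $\lambda_- > 1$ is a lower bound for the eigenvalue moduli of $A$. Then $|\widehat{a}(\xi)| \lesssim b^{k\zeta_-}\rho_*(\xi)^{\zeta_-}$ whenever $\rho_*(\xi) \le b^{-k}$, with implicit constant independent of $a$, $k$, $\xi$. -/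

import Mathlib

open MeasureTheory Matrix Filter Polynomial
open scoped Real Topology NNReal ENNReal

attribute [local instance] Matrix.linftyOpNormedAddCommGroup Matrix.linftyOpNormedRing
  Matrix.linftyOpNormedAlgebra

section AuxLemmas
variable {d : ℕ}

lemma aux_dot_le (x y : Fin d → ℝ) : |x ⬝ᵥ y| ≤ d * ‖x‖ * ‖y‖ := by
  calc |∑ i, x i * y i| ≤ ∑ i, |x i * y i| := Finset.abs_sum_le_sum_abs _ _
    _ ≤ ∑ _i : Fin d, ‖x‖ * ‖y‖ := by
        refine Finset.sum_le_sum fun i _ => ?_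
        rw [abs_mul]
        exact mul_le_mul (norm_le_pi_norm x i) (norm_le_pi_norm y i) (abs_nonneg _) (norm_nonneg _)
    _ = d * ‖x‖ * ‖y‖ := by simp [Finset.sum_const, mul_assoc]

lemma aux_mem_image {M : Matrix (Fin d) (Fin d) ℝ} (h : IsUnit M.det)
    {U : Set (Fin d → ℝ)} {x : Fin d → ℝ} :
    x ∈ M.mulVec '' U ↔ M⁻¹ *ᵥ x ∈ U := by
  constructor
  · rintro ⟨y, hy, rfl⟩
    rwa [Matrix.mulVec_mulVec, Matrix.nonsing_inv_mul _ h, Matrix.one_mulVec]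
  · intro hx
    exact ⟨M⁻¹ *ᵥ x, hx, by rw [Matrix.mulVec_mulVec, Matrix.mul_nonsing_inv _ h,
      Matrix.one_mulVec]⟩

lemma aux_isOpen_image {M : Matrix (Fin d) (Fin d) ℝ} (h : IsUnit M.det)
    {U : Set (Fin d → ℝ)} (hU : IsOpen U) : IsOpen (M.mulVec '' U) := by
  have : M.mulVec '' U = (M⁻¹).mulVec ⁻¹' U := by
    ext x; exact aux_mem_image h
  rw [this]
  have hc : Continuous fun x : Fin d → ℝ => M⁻¹ *ᵥ x := by
    have := (Matrix.mulVecLin M⁻¹).continuous_of_finiteDimensional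
    exact this
  exact hU.preimage hc

lemma aux_vol (M : Matrix (Fin d) (Fin d) ℝ) (s : Set (Fin d → ℝ)) :
    volume (M.mulVec '' s) = ENNReal.ofReal |M.det| * volume s := by
  have h := MeasureTheory.Measure.addHaar_image_linearMap (volume : Measure (Fin d → ℝ))
    (Matrix.toLin' M) s
  have himg : ⇑(Matrix.toLin' M) '' s = M.mulVec '' s :=
    Set.image_congr' (fun v => Matrix.toLin'_apply M v)
  rw [himg, LinearMap.det_toLin'] at h
  exact h

/-- Gelfand-formula based power bound. -/
lemma aux_pow_bound (B : Matrix (Fin d) (Fin d) ℂ) {r : ℝ≥0} (hr : 0 < r)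
    (h : ∀ z ∈ spectrum ℂ B, ‖z‖₊ < r) :
    ∃ C : ℝ, 0 < C ∧ ∀ n : ℕ, ‖B ^ n‖ ≤ C * (r : ℝ) ^ n := by
  have hrad : spectralRadius ℂ B < (r : ℝ≥0∞) := by
    rcases (spectrum ℂ B).eq_empty_or_nonempty with he | hne
    · rw [spectralRadius, he]
      simpa using (ENNReal.coe_pos.mpr hr)
    · exact spectrum.spectralRadius_lt_of_forall_lt_of_nonempty hne h
  have htend := spectrum.pow_nnnorm_pow_one_div_tendsto_nhds_spectralRadius B
  have hev : ∀ᶠ n : ℕ in atTop, (‖B ^ n‖₊ : ℝ≥0∞) ^ (1 / (n : ℝ)) < (r : ℝ≥0∞) :=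
    htend.eventually_lt_const hrad
  obtain ⟨N, hN⟩ := eventually_atTop.mp hev
  have key : ∀ n : ℕ, N + 1 ≤ n → ‖B ^ n‖ ≤ (r : ℝ) ^ n := by
    intro n hn
    have hn0 : (n : ℝ) ≠ 0 := Nat.cast_ne_zero.mpr (by omega)
    have h1 := hN n (le_trans (Nat.le_succ N) hn)
    have h2 : ((‖B ^ n‖₊ : ℝ≥0∞) ^ (1 / (n : ℝ))) ^ (n : ℝ) ≤ (r : ℝ≥0∞) ^ (n : ℝ) :=
      ENNReal.rpow_le_rpow h1.le (by positivity)
    rw [← ENNReal.rpow_mul, one_div, inv_mul_cancel₀ hn0, ENNReal.rpow_one] at h2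
    have h3 : (‖B ^ n‖₊ : ℝ≥0∞) ≤ ((r ^ n : ℝ≥0) : ℝ≥0∞) := by
      rwa [show ((r : ℝ≥0∞)) ^ (n : ℝ) = ((r ^ n : ℝ≥0) : ℝ≥0∞) by
        rw [ENNReal.rpow_natCast, ENNReal.coe_pow]] at h2
    have h4 : ‖B ^ n‖₊ ≤ r ^ n := ENNReal.coe_le_coe.mp h3
    calc ‖B ^ n‖ = ((‖B ^ n‖₊ : ℝ≥0) : ℝ) := rfl
      _ ≤ ((r ^ n : ℝ≥0) : ℝ) := by exact_mod_cast h4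
      _ = (r : ℝ) ^ n := by push_cast; ring
  have hsum0 : 0 ≤ ∑ i ∈ Finset.range (N + 1), ‖B ^ i‖ / (r : ℝ) ^ i :=
    Finset.sum_nonneg fun i _ => by positivity
  refine ⟨(∑ i ∈ Finset.range (N + 1), ‖B ^ i‖ / (r : ℝ) ^ i) + 1, by linarith, fun n => ?_⟩
  set C : ℝ := (∑ i ∈ Finset.range (N + 1), ‖B ^ i‖ / (r : ℝ) ^ i) + 1 with hC
  have hrpos : (0 : ℝ) < (r : ℝ) ^ n := by positivity
  rcases le_or_gt n N with hle | hgt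
  · have hterm : ‖B ^ n‖ / (r : ℝ) ^ n ≤ C := by
      have := Finset.single_le_sum (f := fun i => ‖B ^ i‖ / (r : ℝ) ^ i)
        (fun i _ => by positivity) (Finset.mem_range.mpr (Nat.lt_succ_of_le hle))
      rw [hC]
      linarith
    calc ‖B ^ n‖ = (‖B ^ n‖ / (r : ℝ) ^ n) * (r : ℝ) ^ n := by
          field_simp
      _ ≤ C * (r : ℝ) ^ n := mul_le_mul_of_nonneg_right hterm hrpos.le
  · have h1 : 1 ≤ C := by rw [hC]; linarith
    calc ‖B ^ n‖ ≤ (r : ℝ) ^ n := key n hgt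
      _ ≤ C * (r : ℝ) ^ n := le_mul_of_one_le_left hrpos.le h1

/-- Real version: action of powers on vectors. -/
lemma aux_mulVec_pow_bound (M : Matrix (Fin d) (Fin d) ℝ) {r : ℝ≥0} (hr : 0 < r)
    (h : ∀ z ∈ spectrum ℂ (M.map Complex.ofReal), ‖z‖₊ < r) :
    ∃ C : ℝ, 0 < C ∧ ∀ (n : ℕ) (v : Fin d → ℝ), ‖(M ^ n) *ᵥ v‖ ≤ C * (r : ℝ) ^ n * ‖v‖ := by
  obtain ⟨C, hC, hbd⟩ := aux_pow_bound (M.map Complex.ofReal) hr h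
  refine ⟨C, hC, fun n v => ?_⟩
  have hmap : (M ^ n).map Complex.ofReal = (M.map Complex.ofReal) ^ n := by
    have := map_pow (Complex.ofRealHom.mapMatrix) M n
    exact this
  have hnorm_vec : ∀ w : Fin d → ℝ, ‖(fun i => ((w i : ℝ) : ℂ))‖ = ‖w‖ := by
    intro w
    simp only [Pi.norm_def, Pi.nnnorm_def]
    congr 1
    refine Finset.sup_congr rfl fun i _ => ?_
    exact Complex.nnnorm_real (w i)
  have heq : (fun i => (((M ^ n *ᵥ v) i : ℝ) : ℂ)) =
      ((M.map Complex.ofReal) ^ n) *ᵥ (fun i => ((v i : ℝ) : ℂ)) := by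
    funext i
    rw [← hmap]
    exact RingHom.map_mulVec Complex.ofRealHom (M ^ n) v i
  have : ‖M ^ n *ᵥ v‖ = ‖((M.map Complex.ofReal) ^ n) *ᵥ (fun i => ((v i : ℝ) : ℂ))‖ := by
    rw [← heq, hnorm_vec]
  rw [this]
  calc ‖((M.map Complex.ofReal) ^ n) *ᵥ (fun i => ((v i : ℝ) : ℂ))‖
      ≤ ‖(M.map Complex.ofReal) ^ n‖ * ‖(fun i => ((v i : ℝ) : ℂ))‖ :=
        Matrix.linfty_opNorm_mulVec _ _
    _ ≤ (C * (r : ℝ) ^ n) * ‖v‖ := by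
        rw [hnorm_vec]
        exact mul_le_mul_of_nonneg_right (hbd n) (norm_nonneg _)
    _ = C * (r : ℝ) ^ n * ‖v‖ := by ring

lemma aux_spec_transpose (B : Matrix (Fin d) (Fin d) ℂ) :
    spectrum ℂ Bᵀ = spectrum ℂ B := by
  ext z
  simp only [spectrum.mem_iff, not_iff_not]
  have h : algebraMap ℂ (Matrix (Fin d) (Fin d) ℂ) z - Bᵀ =
      (algebraMap ℂ (Matrix (Fin d) (Fin d) ℂ) z - B)ᵀ := by
    rw [Algebra.algebraMap_eq_smul_one, Matrix.transpose_sub, Matrix.transpose_smul,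
      Matrix.transpose_one]
  rw [h, Matrix.isUnit_iff_isUnit_det, Matrix.det_transpose, ← Matrix.isUnit_iff_isUnit_det]

lemma aux_root_spec (B : Matrix (Fin d) (Fin d) ℂ) {z : ℂ} (hz : z ∈ B.charpoly.roots) :
    z ∈ spectrum ℂ B := by
  rw [Polynomial.mem_roots'] at hz
  obtain ⟨-, hroot⟩ := hz
  rw [spectrum.mem_iff]
  have heval : B.charpoly.eval z = (Matrix.scalar (Fin d) z - B).det := by
    rw [Matrix.charpoly, _root_.eval_det, matPolyEquiv_charmatrix, Polynomial.eval_sub,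
      Polynomial.eval_X, Polynomial.eval_C]
  intro hunit
  rw [Matrix.isUnit_iff_isUnit_det] at hunit
  have hsc : algebraMap ℂ (Matrix (Fin d) (Fin d) ℂ) z = Matrix.scalar (Fin d) z := rfl
  rw [hsc, ← heval, hroot] at hunit
  exact (not_isUnit_zero : ¬IsUnit (0 : ℂ)) hunit

lemma aux_spec_inv (B : Matrix (Fin d) (Fin d) ℂ) (hB : IsUnit B.det) {t : ℝ} (ht : 1 < t)
    (h : ∀ z ∈ spectrum ℂ B, t < ‖z‖) :
    ∀ w ∈ spectrum ℂ Bᵀ⁻¹, ‖w‖₊ < (Real.toNNReal t)⁻¹ := by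
  intro w hw
  have hBt : IsUnit Bᵀ.det := by rwa [Matrix.det_transpose]
  have hBtu : IsUnit Bᵀ := (Matrix.isUnit_iff_isUnit_det _).mpr hBt
  set u : (Matrix (Fin d) (Fin d) ℂ)ˣ := hBtu.unit with hu
  have hcoe : (↑u⁻¹ : Matrix (Fin d) (Fin d) ℂ) = Bᵀ⁻¹ := by
    rw [Matrix.coe_units_inv, IsUnit.unit_spec]
  -- w ≠ 0
  have hw0 : w ≠ 0 := by
    rintro rfl
    rw [spectrum.mem_iff] at hw
    apply hw
    simp only [map_zero, zero_sub]
    exact (IsUnit.neg_iff _).mpr (by rw [← hcoe]; exact u⁻¹.isUnit)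
  set rw0 : ℂˣ := (Units.mk0 w hw0)⁻¹ with hrw
  have hiff := spectrum.inv_mem_iff (r := rw0) (a := u)
  have hrhs : (↑rw0⁻¹ : ℂ) ∈ spectrum ℂ (↑u⁻¹ : Matrix (Fin d) (Fin d) ℂ) := by
    rw [hcoe]
    simpa [hrw] using hw
  have hlhs : (↑rw0 : ℂ) ∈ spectrum ℂ (↑u : Matrix (Fin d) (Fin d) ℂ) := hiff.mpr hrhs
  have hmem : w⁻¹ ∈ spectrum ℂ B := by
    rw [← aux_spec_transpose B]
    have : (↑u : Matrix (Fin d) (Fin d) ℂ) = Bᵀ := rfl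
    rw [this] at hlhs
    simpa [hrw] using hlhs
  have hgt := h _ hmem
  rw [norm_inv] at hgt
  have habs : ‖w‖ < t⁻¹ := by
    have hawpos : 0 < ‖w‖ := by
      exact norm_pos_iff.mpr hw0
    rw [lt_inv_comm₀ (by linarith) hawpos] at hgt
    exact hgt
  have ht0 : (0:ℝ) < t := by linarith
  rw [← NNReal.coe_lt_coe]
  push_cast
  rw [Real.coe_toNNReal t ht0.le]
  simpa using habs

lemma aux_det_ge (hd : d ≠ 0) (B : Matrix (Fin d) (Fin d) ℂ) {t : ℝ} (ht : 1 ≤ t)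
    (h : ∀ z ∈ spectrum ℂ B, t < ‖z‖) : t ≤ ‖B.det‖ := by
  have hdet : B.det = B.charpoly.roots.prod := Matrix.det_eq_prod_roots_charpoly B
  have hcard : Multiset.card B.charpoly.roots = d := by
    rw [(Polynomial.splits_iff_card_roots).mp (IsAlgClosed.splits B.charpoly),
      Matrix.charpoly_natDegree_eq_dim, Fintype.card_fin]
  set t' : ℝ≥0 := Real.toNNReal t with ht'
  have h1t' : 1 ≤ t' := by
    rw [ht', ← Real.toNNReal_one]
    exact Real.toNNReal_le_toNNReal ht
  have hprod : ‖B.charpoly.roots.prod‖₊ = (B.charpoly.roots.map (fun z => ‖z‖₊)).prod := by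
    exact (Multiset.prod_hom B.charpoly.roots (nnnormHom : ℂ →*₀ ℝ≥0).toMonoidHom).symm
  have hall : ∀ x ∈ B.charpoly.roots.map (fun z => ‖z‖₊), t' ≤ x := by
    intro x hx
    rw [Multiset.mem_map] at hx
    obtain ⟨z, hz, rfl⟩ := hx
    have := h z (aux_root_spec B hz)
    rw [ht']
    refine (Real.toNNReal_le_iff_le_coe).mpr ?_
    simpa using this.le
  have hpow := Multiset.pow_card_le_prod hall
  rw [Multiset.card_map, hcard] at hpow
  have ht'd : t' ≤ t' ^ d := le_self_pow₀ h1t' hd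
  have : t' ≤ ‖B.det‖₊ := by
    rw [hdet, hprod]
    exact le_trans ht'd hpow
  have := NNReal.coe_le_coe.mpr this
  rw [ht'] at this
  rw [Real.coe_toNNReal t (by linarith)] at this
  simpa using this

end AuxLemmas

/-- The open Euclidean unit ball in `ℝᵈ`. -/
def eucBall (d : ℕ) : Set (Fin d → ℝ) := {x | ∑ i, x i ^ 2 < 1}

/-- The Fourier transform `f̂(ξ) = ∫ f(x) e^{-2πi x·ξ} dx` on `ℝᵈ`. -/
noncomputable def ft {d : ℕ} (f : (Fin d → ℝ) → ℂ) (ξ : Fin d → ℝ) : ℂ :=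
  ∫ x : Fin d → ℝ, Complex.exp (-(2 * Real.pi * Complex.I) * (∑ i, x i * ξ i)) * f x

set_option maxHeartbeats 1600000 in
/-- Bownik–Wang Fourier decay of anisotropic `H¹_A`-atoms: if `a` is an atom supported in
`Δ_k = A^k(Δ)` and `ρ_*` is the step quasi-norm built from the nested ellipsoids of `A^*`,
then `|â(ξ)| ≲ b^{kζ₋} ρ_*(ξ)^{ζ₋}` whenever `ρ_*(ξ) ≤ b^{-k}`, uniformly in `a, k, ξ`. -/
theorem stmt_9 (d : ℕ) (A : Matrix (Fin d) (Fin d) ℝ) (hA : IsUnit A.det)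
    (hspec : ∀ z ∈ spectrum ℂ (A.map (Complex.ofReal)), 1 < ‖z‖)
    (b : ℝ) (hb : b = |A.det|)
    -- the ellipsoid of `A` and its dilates
    (P : Matrix (Fin d) (Fin d) ℝ) (hP : IsUnit P.det)
    (Δ : Set (Fin d → ℝ)) (hΔ : Δ = P.mulVec '' eucBall d)
    (hnest : Δ ⊆ A.mulVec '' Δ)
    (Δk : ℤ → Set (Fin d → ℝ)) (hΔk : ∀ k : ℤ, Δk k = (A ^ k).mulVec '' Δ)
    -- the ellipsoid of the adjoint `Aᵀ` and the associated step quasi-norm `ρ_*`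
    (Ps : Matrix (Fin d) (Fin d) ℝ) (hPs : IsUnit Ps.det)
    (Δs : Set (Fin d → ℝ)) (hΔs : Δs = Ps.mulVec '' eucBall d)
    (hnests : Δs ⊆ Aᵀ.mulVec '' Δs)
    (Δsk : ℤ → Set (Fin d → ℝ)) (hΔsk : ∀ k : ℤ, Δsk k = (Aᵀ ^ k).mulVec '' Δs)
    (ρs : (Fin d → ℝ) → ℝ) (hρs0 : ρs 0 = 0)
    (hρs : ∀ (k : ℤ) (ξ : Fin d → ℝ), ξ ∈ Δsk (k + 1) \ Δsk k → ρs ξ = b ^ k)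
    -- eigenvalue lower bound and `ζ₋`
    (lamm : ℝ) (hlamm : 1 < lamm)
    (hlow : ∀ z ∈ spectrum ℂ (A.map (Complex.ofReal)), lamm < ‖z‖)
    (zm : ℝ) (hzm : zm = Real.log lamm / Real.log b) :
    ∃ C : ℝ, 0 < C ∧ ∀ (k : ℤ) (a : (Fin d → ℝ) → ℂ),
      Integrable a volume →
      (Function.support a ⊆ Δk k) →
      (∀ᵐ x ∂volume, ‖a x‖ ≤ (volume (Δk k)).toReal⁻¹) →
      (∫ x, a x) = 0 →
      ∀ ξ : Fin d → ℝ, ρs ξ ≤ b ^ (-k : ℤ) →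
        ‖ft a ξ‖ ≤ C * b ^ ((k : ℝ) * zm) * ρs ξ ^ zm := by
  classical
  have hdet0 : A.det ≠ 0 := hA.ne_zero
  have hb0 : 0 < b := by rw [hb]; exact abs_pos.mpr hdet0
  have hlamm0 : (0:ℝ) < lamm := by linarith
  -- transpose matrix
  set T := Aᵀ with hTdef
  have hdT : IsUnit T.det := by rwa [hTdef, Matrix.det_transpose]
  -- complexification
  set Bc := A.map Complex.ofReal with hBc
  have hdetBc : Bc.det = (A.det : ℂ) := by
    rw [hBc]
    exact (RingHom.map_det Complex.ofRealHom A).symm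
  have hdBc : IsUnit Bc.det := by
    rw [hdetBc, isUnit_iff_ne_zero]
    exact_mod_cast hdet0
  -- Gelfand-type bound for T⁻¹
  have hmapinv : (T⁻¹).map Complex.ofReal = Bcᵀ⁻¹ := by
    have h1 : T.map Complex.ofReal = Bcᵀ := by rw [hTdef, hBc, Matrix.transpose_map]
    have hBt : IsUnit (Bcᵀ).det := by rwa [Matrix.det_transpose]
    refine (Matrix.inv_eq_right_inv ?_).symm
    have hofr : Complex.ofReal = ⇑Complex.ofRealHom := rfl
    rw [← h1, hofr, ← Matrix.map_mul,
      Matrix.mul_nonsing_inv T (by rwa [hTdef, Matrix.det_transpose])]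
    exact Matrix.map_one _ (map_zero _) (map_one _)
  have hspecinv : ∀ z ∈ spectrum ℂ ((T⁻¹).map Complex.ofReal),
      ‖z‖₊ < (Real.toNNReal lamm)⁻¹ := by
    rw [hmapinv]
    exact aux_spec_inv Bc hdBc hlamm hlow
  have hrpos : (0:ℝ≥0) < (Real.toNNReal lamm)⁻¹ := by
    rw [inv_pos]
    simp [Real.toNNReal_pos, hlamm0]
  obtain ⟨C₀, hC₀, hGel0⟩ := aux_mulVec_pow_bound T⁻¹ hrpos hspecinv
  have hcoer : (((Real.toNNReal lamm)⁻¹ : ℝ≥0) : ℝ) = lamm⁻¹ := by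
    push_cast
    rw [Real.coe_toNNReal _ hlamm0.le]
  have hGel : ∀ (n : ℕ) (v : Fin d → ℝ), ‖(T⁻¹ ^ n) *ᵥ v‖ ≤ C₀ * lamm⁻¹ ^ n * ‖v‖ := by
    intro n v
    have := hGel0 n v
    rwa [hcoer] at this
  -- zpow negative = inverse powers
  have hzpn : ∀ m : ℕ, T ^ (-(m:ℤ)) = (T⁻¹) ^ m := by
    intro m
    rw [Matrix.zpow_neg_natCast]
    have := Matrix.inv_zpow T (m : ℤ)
    rw [zpow_natCast, zpow_natCast] at this
    exact this.symm
  -- membership criterion for Δsk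
  have hmem : ∀ (m : ℤ) (ξ : Fin d → ℝ), ξ ∈ Δsk m ↔ T ^ (-m) *ᵥ ξ ∈ Δs := by
    intro m ξ
    rw [hΔsk m, aux_mem_image (hdT.det_zpow m), Matrix.zpow_neg hdT]

  -- monotonicity of Δsk
  have hstep : ∀ m : ℤ, Δsk m ⊆ Δsk (m+1) := by
    intro m ξ hξ
    rw [hΔsk] at hξ
    obtain ⟨η, hη, rfl⟩ := hξ
    obtain ⟨η', hη', hηeq⟩ := hnests hη
    rw [hΔsk]
    refine ⟨η', hη', ?_⟩
    rw [← hηeq, Matrix.mulVec_mulVec, ← Matrix.zpow_add_one hdT m]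
  have hmono : ∀ m m' : ℤ, m ≤ m' → Δsk m ⊆ Δsk m' := by
    intro m m' h
    exact Int.le_induction (motive := fun t _ => Δsk m ⊆ Δsk t) subset_rfl
      (fun n _ ih => ih.trans (hstep n)) m' h
  -- norm bounds for fixed matrices
  have hbnd : ∀ M : Matrix (Fin d) (Fin d) ℝ, ∃ c : ℝ, 0 < c ∧ ∀ v, ‖M *ᵥ v‖ ≤ c * ‖v‖ := by
    intro M
    refine ⟨‖M‖ + 1, by positivity, fun v => ?_⟩
    refine le_trans (Matrix.linfty_opNorm_mulVec M v) ?_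
    have := norm_nonneg v
    nlinarith [norm_nonneg M]
  obtain ⟨CP, hCPpos, hCP⟩ := hbnd P
  obtain ⟨CPs, hCPspos, hCPs⟩ := hbnd Ps
  obtain ⟨CPsi, hCPsipos, hCPsi⟩ := hbnd Ps⁻¹
  obtain ⟨CT, hCTpos, hCT⟩ := hbnd T
  -- Euclidean ball facts
  have heucopen : IsOpen (eucBall d) := by
    have : eucBall d = (fun x : Fin d → ℝ => ∑ i, x i ^ 2) ⁻¹' (Set.Iio 1) := rfl
    rw [this]
    exact (continuous_finset_sum _ fun i _ => (continuous_apply i).pow 2).isOpen_preimage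
      _ isOpen_Iio
  have heuc0 : (0 : Fin d → ℝ) ∈ eucBall d := by
    simp [eucBall]
  have heucnorm : ∀ u ∈ eucBall d, ‖u‖ ≤ 1 := by
    intro u hu
    rw [pi_norm_le_iff_of_nonneg zero_le_one]
    intro i
    have h1 : u i ^ 2 ≤ ∑ j, u j ^ 2 :=
      Finset.single_le_sum (fun j _ => sq_nonneg (u j)) (Finset.mem_univ i)
    have h2 : u i ^ 2 < 1 := lt_of_le_of_lt h1 hu
    have := (sq_lt_one_iff_abs_lt_one (u i)).mp h2
    rw [Real.norm_eq_abs]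
    linarith
  -- volumes
  have hvolB_pos : 0 < volume (eucBall d) :=
    heucopen.measure_pos volume ⟨0, heuc0⟩
  have hvolB_fin : volume (eucBall d) < ⊤ := by
    refine lt_of_le_of_lt (measure_mono ?_) (isCompact_closedBall (0 : Fin d → ℝ) 1).measure_lt_top
    intro u hu
    simpa [Metric.mem_closedBall, dist_zero_right] using heucnorm u hu
  have hvolΔ : volume Δ = ENNReal.ofReal |P.det| * volume (eucBall d) := by
    rw [hΔ, aux_vol]
  have hvolΔpos : 0 < volume Δ := by
    rw [hvolΔ]
    exact ENNReal.mul_pos (ENNReal.ofReal_pos.mpr (abs_pos.mpr hP.ne_zero)).ne' hvolB_pos.ne'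
  have hvolΔfin : volume Δ < ⊤ := by
    rw [hvolΔ]
    exact ENNReal.mul_lt_top ENNReal.ofReal_lt_top hvolB_fin
  have hdetzpow : ∀ k : ℤ, |(A ^ k).det| = b ^ k := by
    intro k
    obtain ⟨m, rfl | rfl⟩ := Int.eq_nat_or_neg k
    · rw [zpow_natCast, Matrix.det_pow, abs_pow, ← hb, zpow_natCast]
    · rw [Matrix.zpow_neg_natCast, Matrix.det_nonsing_inv, Matrix.det_pow,
        Ring.inverse_eq_inv', abs_inv, abs_pow, ← hb, _root_.zpow_neg, zpow_natCast]
  have hvolΔk : ∀ k : ℤ, volume (Δk k) = ENNReal.ofReal (b ^ k) * volume Δ := by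
    intro k
    rw [hΔk k, aux_vol, hdetzpow]
  have hvolΔkfin : ∀ k : ℤ, volume (Δk k) < ⊤ := by
    intro k
    rw [hvolΔk]
    exact ENNReal.mul_lt_top ENNReal.ofReal_lt_top hvolΔfin
  have hvolΔkpos : ∀ k : ℤ, 0 < volume (Δk k) := by
    intro k
    rw [hvolΔk]
    exact ENNReal.mul_pos (ENNReal.ofReal_pos.mpr (zpow_pos hb0 k)).ne' hvolΔpos.ne'
  have hmeasΔk : ∀ k : ℤ, MeasurableSet (Δk k) := by
    intro k
    rw [hΔk k]
    exact (aux_isOpen_image (hA.det_zpow k) (hΔ ▸ aux_isOpen_image hP heucopen)).measurableSet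
  -- final constant
  set Cd : ℝ := (4 * Real.pi) * ((d:ℝ) + 1) * CP * CT * C₀ * CPs + 1 with hCd
  have hCdpos : 0 < Cd := by
    rw [hCd]
    have := Real.pi_pos
    positivity
  refine ⟨Cd, hCdpos, ?_⟩
  intro k a hint hsupp hbdd hzero ξ hξρ
  by_cases hξ0 : ξ = 0
  · -- trivial case
    subst hξ0
    have hft : ft a 0 = ∫ x, a x := by
      unfold ft
      simp
    rw [hft, hzero, norm_zero]
    have h1 : (0:ℝ) ≤ b ^ ((k : ℝ) * zm) := (Real.rpow_pos_of_pos hb0 _).le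
    have h2 : (0:ℝ) ≤ ρs 0 ^ zm := by
      rw [hρs0]
      exact Real.rpow_nonneg le_rfl zm
    positivity
  · -- main case
    have hd0 : d ≠ 0 := by
      rintro rfl
      exact hξ0 (funext fun i => i.elim0)
    have hξnorm : 0 < ‖ξ‖ := norm_pos_iff.mpr hξ0
    have hb1 : 1 < b := by
      have h := aux_det_ge hd0 Bc hlamm.le hlow
      have : ‖Bc.det‖ = b := by
        rw [hdetBc, Complex.norm_real, Real.norm_eq_abs, ← hb]
      rw [this] at h
      linarith
    -- small ball inside Δs
    have hball : ∀ w : Fin d → ℝ, ‖w‖ < (CPsi * ((d:ℝ)+1))⁻¹ → w ∈ Δs := by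
      intro w hw
      rw [hΔs, aux_mem_image hPs]
      show ∑ i, (Ps⁻¹ *ᵥ w) i ^ 2 < 1
      have hylt : ‖Ps⁻¹ *ᵥ w‖ < ((d:ℝ)+1)⁻¹ := by
        calc ‖Ps⁻¹ *ᵥ w‖ ≤ CPsi * ‖w‖ := hCPsi w
          _ < CPsi * (CPsi * ((d:ℝ)+1))⁻¹ := mul_lt_mul_of_pos_left hw hCPsipos
          _ = ((d:ℝ)+1)⁻¹ := by
              rw [mul_inv, ← mul_assoc, mul_inv_cancel₀ hCPsipos.ne', one_mul]
      calc ∑ i, (Ps⁻¹ *ᵥ w) i ^ 2 ≤ ∑ _i : Fin d, (((d:ℝ)+1)⁻¹) ^ 2 := by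
            refine Finset.sum_le_sum fun i _ => ?_
            have h1 : |(Ps⁻¹ *ᵥ w) i| ≤ ‖Ps⁻¹ *ᵥ w‖ := by
              rw [← Real.norm_eq_abs]
              exact norm_le_pi_norm _ i
            have h2 : |(Ps⁻¹ *ᵥ w) i| ≤ ((d:ℝ)+1)⁻¹ := le_trans h1 hylt.le
            calc (Ps⁻¹ *ᵥ w) i ^ 2 = |(Ps⁻¹ *ᵥ w) i| ^ 2 := (sq_abs _).symm
              _ ≤ (((d:ℝ)+1)⁻¹) ^ 2 := by
                  exact pow_le_pow_left₀ (abs_nonneg _) h2 2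
        _ = (d : ℝ) * (((d:ℝ)+1)⁻¹) ^ 2 := by
            rw [Finset.sum_const, Finset.card_univ, Fintype.card_fin, nsmul_eq_mul]
        _ < 1 := by
            rw [inv_pow, mul_inv_lt_iff₀ (by positivity), one_mul]
            nlinarith [Nat.cast_nonneg (α := ℝ) d]
    -- upper index
    have hupper : ∃ m : ℕ, ξ ∈ Δsk (m : ℤ) := by
      have hinv1 : lamm⁻¹ < 1 := inv_lt_one_of_one_lt₀ hlamm
      obtain ⟨m, hm⟩ := exists_pow_lt_of_lt_one
        (x := (CPsi * ((d:ℝ)+1))⁻¹ / (C₀ * (‖ξ‖ + 1))) (by positivity) hinv1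
      refine ⟨m, ?_⟩
      rw [hmem, hzpn]
      apply hball
      calc ‖(T⁻¹) ^ m *ᵥ ξ‖ ≤ C₀ * lamm⁻¹ ^ m * ‖ξ‖ := hGel m ξ
        _ ≤ C₀ * lamm⁻¹ ^ m * (‖ξ‖ + 1) := by
            have h0 : (0:ℝ) ≤ C₀ * lamm⁻¹ ^ m := by positivity
            nlinarith
        _ < (C₀ * (‖ξ‖ + 1)) * ((CPsi * ((d:ℝ)+1))⁻¹ / (C₀ * (‖ξ‖ + 1))) := by
            have hpos : (0:ℝ) < C₀ * (‖ξ‖ + 1) := by positivity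
            calc C₀ * lamm⁻¹ ^ m * (‖ξ‖ + 1)
                = (C₀ * (‖ξ‖ + 1)) * lamm⁻¹ ^ m := by ring
              _ < (C₀ * (‖ξ‖ + 1)) * ((CPsi * ((d:ℝ)+1))⁻¹ / (C₀ * (‖ξ‖ + 1))) :=
                  mul_lt_mul_of_pos_left hm hpos
        _ = (CPsi * ((d:ℝ)+1))⁻¹ := by
            rw [mul_comm, div_mul_cancel₀ _ (by positivity : (0:ℝ) < C₀ * (‖ξ‖ + 1)).ne']
    -- lower index
    have hlower : ∃ m : ℕ, ξ ∉ Δsk (-(m : ℤ)) := by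
      have hinv1 : lamm⁻¹ < 1 := inv_lt_one_of_one_lt₀ hlamm
      obtain ⟨m, hm⟩ := exists_pow_lt_of_lt_one
        (x := ‖ξ‖ / (C₀ * CPs)) (by positivity) hinv1
      refine ⟨m, fun hcon => ?_⟩
      rw [hΔsk] at hcon
      obtain ⟨y, hy, hyeq⟩ := hcon
      rw [hΔs] at hy
      obtain ⟨u, hu, rfl⟩ := hy
      have h1 : ‖Ps *ᵥ u‖ ≤ CPs := by
        calc ‖Ps *ᵥ u‖ ≤ CPs * ‖u‖ := hCPs u
          _ ≤ CPs * 1 := by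
              exact mul_le_mul_of_nonneg_left (heucnorm u hu) hCPspos.le
          _ = CPs := mul_one _
      have h2 : ‖ξ‖ ≤ C₀ * lamm⁻¹ ^ m * CPs := by
        rw [← hyeq, hzpn]
        calc ‖(T⁻¹) ^ m *ᵥ (Ps *ᵥ u)‖ ≤ C₀ * lamm⁻¹ ^ m * ‖Ps *ᵥ u‖ := hGel m _
          _ ≤ C₀ * lamm⁻¹ ^ m * CPs := by
              exact mul_le_mul_of_nonneg_left h1 (by positivity)
      have h3 : C₀ * lamm⁻¹ ^ m * CPs < ‖ξ‖ := by
        have hpos : (0:ℝ) < C₀ * CPs := by positivity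
        calc C₀ * lamm⁻¹ ^ m * CPs = (C₀ * CPs) * lamm⁻¹ ^ m := by ring
          _ < (C₀ * CPs) * (‖ξ‖ / (C₀ * CPs)) := mul_lt_mul_of_pos_left hm hpos
          _ = ‖ξ‖ := by field_simp
      linarith
    obtain ⟨mU, hmU⟩ := hupper
    obtain ⟨mL, hmL⟩ := hlower
    -- least index
    obtain ⟨j0, hj0mem, hj0least⟩ := Int.exists_least_of_bdd
      (⟨-(mL : ℤ) + 1, fun z hz => by
        by_contra hcon
        push_neg at hcon
        exact hmL (hmono z (-(mL:ℤ)) (by omega) hz)⟩ :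
        ∃ bd : ℤ, ∀ z : ℤ, (fun m => ξ ∈ Δsk m) z → bd ≤ z)
      ⟨(mU : ℤ), hmU⟩
    set j : ℤ := j0 - 1 with hj
    have hρval : ρs ξ = b ^ j := by
      refine hρs j ξ ⟨?_, ?_⟩
      · rw [hj, sub_add_cancel]
        exact hj0mem
      · intro hcon
        have := hj0least _ hcon
        omega
    have hjk : j ≤ -k := by
      rw [hρval] at hξρ
      exact (zpow_le_zpow_iff_right₀ hb1).mp hξρ
    -- decay bound on T^k *ᵥ ξ
    set m' : ℕ := (-(k+j)).toNat with hm'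
    have hm'eq : (m' : ℤ) = -(k+j) := Int.toNat_of_nonneg (by omega)
    obtain ⟨y, hy, hyeq⟩ : ξ ∈ (T ^ (j+1)).mulVec '' Δs := by
      rw [← hΔsk]
      have : j + 1 = j0 := by omega
      rw [this]
      exact hj0mem
    rw [hΔs] at hy
    obtain ⟨u, hu, rfl⟩ := hy
    have hynorm : ‖Ps *ᵥ u‖ ≤ CPs := by
      calc ‖Ps *ᵥ u‖ ≤ CPs * ‖u‖ := hCPs u
        _ ≤ CPs * 1 := mul_le_mul_of_nonneg_left (heucnorm u hu) hCPspos.le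
        _ = CPs := mul_one _
    have hTkξ : ‖T ^ (k:ℤ) *ᵥ ξ‖ ≤ CT * (C₀ * lamm⁻¹ ^ m' * CPs) := by
      have hc1 : T ^ (k:ℤ) *ᵥ ξ = T *ᵥ ((T⁻¹) ^ m' *ᵥ (Ps *ᵥ u)) := by
        rw [← hyeq, Matrix.mulVec_mulVec, ← Matrix.zpow_add hdT]
        have hsplit : k + (j + 1) = 1 + -(m' : ℤ) := by omega
        rw [hsplit, Matrix.zpow_add hdT, zpow_one, hzpn, ← Matrix.mulVec_mulVec]
      rw [hc1]
      calc ‖T *ᵥ ((T⁻¹) ^ m' *ᵥ (Ps *ᵥ u))‖ ≤ CT * ‖(T⁻¹) ^ m' *ᵥ (Ps *ᵥ u)‖ := hCT _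
        _ ≤ CT * (C₀ * lamm⁻¹ ^ m' * CPs) := by
            refine mul_le_mul_of_nonneg_left ?_ hCTpos.le
            calc ‖(T⁻¹) ^ m' *ᵥ (Ps *ᵥ u)‖ ≤ C₀ * lamm⁻¹ ^ m' * ‖Ps *ᵥ u‖ := hGel m' _
              _ ≤ C₀ * lamm⁻¹ ^ m' * CPs :=
                  mul_le_mul_of_nonneg_left hynorm (by positivity)
    -- sup bound on the phase
    set S : ℝ := (d:ℝ) * CP * (CT * (C₀ * lamm⁻¹ ^ m' * CPs)) with hS
    have hSnonneg : 0 ≤ S := by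
      rw [hS]; positivity
    have hphase : ∀ x ∈ Δk k, |x ⬝ᵥ ξ| ≤ S := by
      intro x hx
      rw [hΔk] at hx
      obtain ⟨yx, hyx, rfl⟩ := hx
      rw [hΔ] at hyx
      obtain ⟨ux, hux, rfl⟩ := hyx
      have hyxnorm : ‖P *ᵥ ux‖ ≤ CP := by
        calc ‖P *ᵥ ux‖ ≤ CP * ‖ux‖ := hCP ux
          _ ≤ CP * 1 := mul_le_mul_of_nonneg_left (heucnorm ux hux) hCPpos.le
          _ = CP := mul_one _
      have hdotswap : ((A ^ (k:ℤ)) *ᵥ (P *ᵥ ux)) ⬝ᵥ ξ = (P *ᵥ ux) ⬝ᵥ (T ^ (k:ℤ) *ᵥ ξ) := by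
        rw [dotProduct_comm, Matrix.dotProduct_mulVec, ← Matrix.mulVec_transpose,
          Matrix.transpose_zpow, ← hTdef, dotProduct_comm]
      rw [hdotswap]
      calc |(P *ᵥ ux) ⬝ᵥ (T ^ (k:ℤ) *ᵥ ξ)| ≤ (d:ℝ) * ‖P *ᵥ ux‖ * ‖T ^ (k:ℤ) *ᵥ ξ‖ :=
            aux_dot_le _ _
        _ ≤ S := by
            rw [hS]
            have h1 : (d:ℝ) * ‖P *ᵥ ux‖ ≤ (d:ℝ) * CP := by
              exact mul_le_mul_of_nonneg_left hyxnorm (Nat.cast_nonneg d)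
            have h2 := hTkξ
            have h3 : (0:ℝ) ≤ (d:ℝ) * ‖P *ᵥ ux‖ := by positivity
            have h4 : (0:ℝ) ≤ ‖T ^ (k:ℤ) *ᵥ ξ‖ := norm_nonneg _
            nlinarith [norm_nonneg (P *ᵥ ux), Nat.cast_nonneg (α := ℝ) d, hCPpos]
    -- the integral estimate
    set v : ℝ := (volume (Δk k)).toReal with hv
    have hvpos : 0 < v := by
      rw [hv]
      exact ENNReal.toReal_pos (hvolΔkpos k).ne' (hvolΔkfin k).ne
    set e : (Fin d → ℝ) → ℂ := fun x =>
      Complex.exp (-(2 * Real.pi * Complex.I) * ((x ⬝ᵥ ξ : ℝ) : ℂ)) with he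
    have harg0 : ∀ x : Fin d → ℝ, ((x ⬝ᵥ ξ : ℝ) : ℂ) = ∑ i, (x i : ℂ) * (ξ i : ℂ) := by
      intro x
      push_cast [dotProduct]
      ring
    have hftdef : ft a ξ = ∫ x, e x * a x := by
      unfold ft
      refine integral_congr_ae (Filter.Eventually.of_forall fun x => ?_)
      simp only [he]
      push_cast [dotProduct]
      ring_nf
    have henorm : ∀ x, ‖e x‖ = 1 := by
      intro x
      simp only [he]
      have harg : -(2 * (Real.pi:ℂ) * Complex.I) * ((x ⬝ᵥ ξ : ℝ) : ℂ) =
          ((-(2 * Real.pi * (x ⬝ᵥ ξ)) : ℝ) : ℂ) * Complex.I := by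
        push_cast
        ring
      rw [harg, Complex.norm_exp_ofReal_mul_I]
    have hecont : Continuous e := by
      simp only [he]
      refine Complex.continuous_exp.comp (continuous_const.mul ?_)
      refine Complex.continuous_ofReal.comp ?_
      exact continuous_finset_sum _ fun i _ => (continuous_apply i).mul continuous_const
    have hint1 : Integrable (fun x => (e x - 1) * a x) volume := by
      refine Integrable.bdd_mul (c := 2) hint ((hecont.sub continuous_const).aestronglyMeasurable) (Filter.Eventually.of_forall ?_)
      intro x
      calc ‖e x - 1‖ ≤ ‖e x‖ + ‖(1:ℂ)‖ := norm_sub_le _ _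
        _ = 2 := by rw [henorm x]; norm_num
    have hsplitft : ft a ξ = ∫ x, (e x - 1) * a x := by
      rw [hftdef]
      have : ∀ x, e x * a x = (e x - 1) * a x + a x := fun x => by ring
      rw [integral_congr_ae (Filter.Eventually.of_forall fun x => this x),
        integral_add hint1 hint, hzero, add_zero]
    -- pointwise bound
    set c : ℝ := (4 * Real.pi * S) * v⁻¹ with hc
    have hcnonneg : 0 ≤ c := by
      rw [hc]
      have := Real.pi_pos
      positivity
    have hptbound : ∀ᵐ x ∂volume, ‖(e x - 1) * a x‖ ≤ (Δk k).indicator (fun _ => c) x := by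
      filter_upwards [hbdd] with x hx
      by_cases hxmem : x ∈ Δk k
      · rw [Set.indicator_of_mem hxmem]
        have hexp : ‖e x - 1‖ ≤ 4 * Real.pi * S := by
          have habs := hphase x hxmem
          rcases le_or_gt (2 * Real.pi * |x ⬝ᵥ ξ|) 1 with hsmall | hbig
          · have harg : -(2 * (Real.pi:ℂ) * Complex.I) * ((x ⬝ᵥ ξ : ℝ) : ℂ) =
                ((-(2 * Real.pi * (x ⬝ᵥ ξ)) : ℝ) : ℂ) * Complex.I := by
              push_cast
              ring
            have habsz : ‖(((-(2 * Real.pi * (x ⬝ᵥ ξ)) : ℝ) : ℂ) * Complex.I)‖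
                = 2 * Real.pi * |x ⬝ᵥ ξ| := by
              rw [norm_mul, Complex.norm_I, mul_one, Complex.norm_real, Real.norm_eq_abs, abs_neg, abs_mul]
              rw [abs_of_pos (by positivity : (0:ℝ) < 2 * Real.pi)]
            have h1 : ‖e x - 1‖ ≤ 2 * (2 * Real.pi * |x ⬝ᵥ ξ|) := by
              simp only [he]
              rw [harg]
              have := Complex.norm_exp_sub_one_le (x := ((-(2 * Real.pi * (x ⬝ᵥ ξ)) : ℝ) : ℂ)
                * Complex.I) (by rw [habsz]; exact hsmall)
              rwa [habsz] at this
            refine le_trans h1 ?_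
            have := Real.pi_pos
            nlinarith
          · have h1 : ‖e x - 1‖ ≤ 2 := by
              calc ‖e x - 1‖ ≤ ‖e x‖ + ‖(1:ℂ)‖ := norm_sub_le _ _
                _ = 2 := by rw [henorm x]; norm_num
            have := Real.pi_pos
            nlinarith
        calc ‖(e x - 1) * a x‖ = ‖e x - 1‖ * ‖a x‖ := norm_mul _ _
          _ ≤ (4 * Real.pi * S) * v⁻¹ := by
              have h2 : (0:ℝ) ≤ ‖e x - 1‖ := norm_nonneg _
              have h3 : (0:ℝ) ≤ v⁻¹ := by positivity
              have := Real.pi_pos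
              nlinarith [norm_nonneg (a x)]
          _ = c := hc.symm
      · rw [Set.indicator_of_notMem hxmem]
        have : a x = 0 := by
          by_contra hax
          exact hxmem (hsupp (Function.mem_support.mpr hax))
        rw [this, mul_zero, norm_zero]
    have hindint : Integrable ((Δk k).indicator (fun _ => c)) volume := by
      rw [integrable_indicator_iff (hmeasΔk k)]
      exact integrableOn_const (hvolΔkfin k).ne
    have hmain : ‖ft a ξ‖ ≤ 4 * Real.pi * S := by
      rw [hsplitft]
      refine le_trans (norm_integral_le_of_norm_le hindint hptbound) ?_
      rw [integral_indicator_const _ (hmeasΔk k)]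
      simp only [smul_eq_mul, ← hv]
      rw [hc]
      refine le_of_eq ?_
      calc v * ((4 * Real.pi * S) * v⁻¹) = (4 * Real.pi * S) * (v * v⁻¹) := by ring
        _ = 4 * Real.pi * S := by rw [mul_inv_cancel₀ hvpos.ne', mul_one]
    -- identify the right-hand side
    have hblam : b ^ zm = lamm := by
      rw [hzm, ← Real.logb]
      exact Real.rpow_logb hb0 hb1.ne' hlamm0
    have hrhsval : b ^ ((k:ℝ) * zm) * ρs ξ ^ zm = lamm⁻¹ ^ m' := by
      have h1 : b ^ ((k:ℝ) * zm) = lamm ^ (k:ℤ) := by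
        rw [mul_comm, Real.rpow_mul hb0.le, hblam, Real.rpow_intCast]
      have h2 : ρs ξ ^ zm = lamm ^ (j:ℤ) := by
        rw [hρval, ← Real.rpow_intCast b j, ← Real.rpow_mul hb0.le,
          mul_comm ((j:ℤ):ℝ) zm, Real.rpow_mul hb0.le, hblam, Real.rpow_intCast]
      rw [h1, h2, ← zpow_add₀ (by positivity : lamm ≠ 0)]
      rw [show k + j = -(m' : ℤ) by omega]
      rw [_root_.zpow_neg, ← _root_.inv_zpow, zpow_natCast]
    rw [mul_assoc, hrhsval]
    refine le_trans hmain ?_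
    rw [hS, hCd]
    have hl0 : (0:ℝ) ≤ lamm⁻¹ ^ m' := by positivity
    have := Real.pi_pos
    nlinarith [mul_le_mul_of_nonneg_right
      (le_of_eq (rfl : (4 * Real.pi) * ((d:ℝ) + 1) * CP * CT * C₀ * CPs
        = (4 * Real.pi) * ((d:ℝ) + 1) * CP * CT * C₀ * CPs)) hl0]
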